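/- For all s₁, s₂ ≥ 0 and all u > 0, one has ∫_{s₂}^∞ ∫_{s₁}^∞ Ai(x+y+u²)²·e^{-2(x+y)u − 4u³/3} dy dx ≤ (1/(4u³))·e^{-4(s₁+s₂)u − 8u³/3}; equivalently, the Hilbert–Schmidt norm of the kernel K_{2,1}(x,y) = 1_{x>s₂}1_{y>s₁}Ai(x+y+u²)e^{-(x+y)u − 2u³/3} is at most (1/(2u^{3/2}))·e^{-2(s₁+s₂)u − 4u³/3}. -/

import Mathlib

open MeasureTheory Real Filter Topology

/-- The Airy function, defined for `x ∈ ℝ` by the convergent improper integral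
`Ai(x) = (1/π) lim_{T→∞} ∫₀ᵀ cos(t³/3 + x t) dt`. -/
noncomputable def Ai (x : ℝ) : ℝ :=
  limUnder Filter.atTop
    (fun T : ℝ => (1 / Real.pi) * ∫ t in (0 : ℝ)..T, Real.cos (t ^ 3 / 3 + x * t))

/-- The Hilbert–Schmidt norm `(∫∫ K(x,y)² dx dy)^{1/2}` of a kernel on `ℝ²`. -/
noncomputable def HSnorm (K : ℝ → ℝ → ℝ) : ℝ :=
  Real.sqrt (∫⁻ p : ℝ × ℝ, ENNReal.ofReal (K p.1 p.2 ^ 2)).toReal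


open Complex in
/-- The integrand of the Airy integral, as an entire function. -/
noncomputable def airyF (x : ℝ) (z : ℂ) : ℂ := Complex.exp (Complex.I * (z ^ 3 / 3 + x * z))

open Complex in
lemma airyF_norm (x a b : ℝ) : ‖airyF x (a + b * I)‖ = Real.exp (b ^ 3 / 3 - x * b - a ^ 2 * b) := by
  rw [airyF, Complex.norm_exp]
  congr 1
  simp [Complex.ext_iff, pow_succ, Complex.mul_re, Complex.mul_im]
  ring

open Complex in
lemma airyF_cont (x : ℝ) : Continuous (airyF x) := by
  unfold airyF
  exact Complex.continuous_exp.comp (by continuity)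

open Complex in
lemma airyF_integrable (x u : ℝ) (hu : 0 < u) :
    Integrable (fun t : ℝ => airyF x (t + u * I)) := by
  refine Integrable.mono' ((integrable_exp_neg_mul_sq hu).const_mul (Real.exp (u ^ 3 / 3 - x * u)))
    (((airyF_cont x).comp (by continuity)).aestronglyMeasurable) ?_
  filter_upwards with t
  rw [airyF_norm, ← Real.exp_add]
  apply le_of_eq
  congr 1
  ring

open Complex in
lemma airyF_tendsto (x u : ℝ) (hu : 0 < u) :
    Tendsto (fun T : ℝ => ∫ t in -T..T, airyF x t) atTop
      (𝓝 (∫ t : ℝ, airyF x (t + u * I))) := by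
  have C : ∀ T : ℝ, (∫ t in -T..T, airyF x t) = (∫ t in -T..T, airyF x (t + u * I))
      - I * (∫ y in (0:ℝ)..u, airyF x (T + y * I))
      + I * (∫ y in (0:ℝ)..u, airyF x (-T + y * I)) := by
    intro T
    have := Complex.integral_boundary_rect_eq_zero_of_differentiableOn (airyF x) (-T)
      (T + u * I)
      (by
        apply Differentiable.differentiableOn
        apply Complex.differentiable_exp.comp
        apply Differentiable.const_mul
        apply Differentiable.add
        · exact (differentiable_pow 3).div_const 3
        · exact (differentiable_id).const_mul _)
    simp only [neg_im, ofReal_im, neg_zero, ofReal_zero, zero_mul, add_zero, neg_re, ofReal_re,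
      add_re, mul_re, I_re, mul_zero, I_im, tsub_zero, add_im, mul_im, mul_one, zero_add,
      smul_eq_mul, ofReal_neg] at this
    linear_combination this
  -- the vertical sides tend to zero
  have side : ∀ (a T : ℝ), 1 ≤ T → a ^ 2 = T ^ 2 →
      ‖∫ y in (0:ℝ)..u, airyF x (a + y * I)‖ ≤ Real.exp (u ^ 3 / 3 + |x| * u) / T ^ 2 := by
    intro a T hT ha
    have hT2 : (0:ℝ) < T ^ 2 := by positivity
    calc ‖∫ y in (0:ℝ)..u, airyF x (a + y * I)‖
        ≤ ∫ y in (0:ℝ)..u, ‖airyF x (a + y * I)‖ :=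
          intervalIntegral.norm_integral_le_integral_norm hu.le
      _ ≤ ∫ y in (0:ℝ)..u, Real.exp (u ^ 3 / 3 + |x| * u) * Real.exp (-(T ^ 2 * y)) := by
          apply intervalIntegral.integral_mono_on hu.le
          · apply Continuous.intervalIntegrable
            exact ((airyF_cont x).comp (by continuity)).norm
          · apply Continuous.intervalIntegrable; continuity
          · intro y hy
            rw [airyF_norm, ← Real.exp_add, ha]
            apply Real.exp_le_exp.2
            have hy0 : 0 ≤ y := hy.1
            have hyu : y ≤ u := hy.2
            have h1 : y ^ 3 / 3 ≤ u ^ 3 / 3 := by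
              have := pow_le_pow_left₀ hy0 hyu 3
              linarith
            have h2 : -(x * y) ≤ |x| * u := by
              calc -(x * y) ≤ |x * y| := neg_le_abs _
                _ = |x| * |y| := abs_mul x y
                _ ≤ |x| * u := by
                    apply mul_le_mul_of_nonneg_left _ (abs_nonneg x)
                    rw [_root_.abs_of_nonneg hy0]; exact hyu
            have : a ^ 2 * y = T ^ 2 * y := by rw [ha]
            nlinarith [this]
      _ = Real.exp (u ^ 3 / 3 + |x| * u) * ∫ y in (0:ℝ)..u, Real.exp (-(T ^ 2 * y)) := by
          rw [intervalIntegral.integral_const_mul]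
      _ ≤ Real.exp (u ^ 3 / 3 + |x| * u) * (1 / T ^ 2) := by
          apply mul_le_mul_of_nonneg_left _ (Real.exp_nonneg _)
          have key : ∀ y : ℝ, HasDerivAt (fun y => -(T ^ 2)⁻¹ * Real.exp (-(T ^ 2 * y)))
              (Real.exp (-(T ^ 2 * y))) y := by
            intro y
            have h1 : HasDerivAt (fun y : ℝ => -(T ^ 2 * y)) (-(T ^ 2)) y := by
              have := ((hasDerivAt_id y).const_mul (T ^ 2)).neg
              simp only [mul_one] at this
              exact this
            have h2 := (h1.exp).const_mul (-(T ^ 2)⁻¹)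
            refine h2.congr_deriv ?_
            linear_combination (Real.exp (-(T ^ 2 * y))) * inv_mul_cancel₀ hT2.ne'
          rw [intervalIntegral.integral_eq_sub_of_hasDerivAt (fun y _ => key y)
            (by apply Continuous.intervalIntegrable; continuity)]
          have : Real.exp (-(T ^ 2 * u)) ≥ 0 := Real.exp_nonneg _
          simp only [mul_zero, neg_zero, Real.exp_zero, mul_one]
          rw [one_div]
          have hTinv : (0:ℝ) ≤ (T ^ 2)⁻¹ := by positivity
          nlinarith [Real.exp_nonneg (-(T ^ 2 * u))]
      _ = Real.exp (u ^ 3 / 3 + |x| * u) / T ^ 2 := by ring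
  have tend0 : Tendsto (fun T : ℝ => Real.exp (u ^ 3 / 3 + |x| * u) / T ^ 2) atTop (𝓝 0) :=
    Tendsto.div_atTop tendsto_const_nhds (tendsto_pow_atTop two_ne_zero)
  have h4 : Tendsto (fun T : ℝ => ∫ y in (0:ℝ)..u, airyF x (T + y * I)) atTop (𝓝 0) := by
    apply squeeze_zero_norm' _ tend0
    filter_upwards [eventually_ge_atTop (1:ℝ)] with T hT
    exact side T T hT rfl
  have h5 : Tendsto (fun T : ℝ => ∫ y in (0:ℝ)..u, airyF x (-T + y * I)) atTop (𝓝 0) := by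
    apply squeeze_zero_norm' _ tend0
    filter_upwards [eventually_ge_atTop (1:ℝ)] with T hT
    simpa only [Complex.ofReal_neg] using side (-T) T hT (by ring)
  have h1 : Tendsto (fun T : ℝ => ∫ t in -T..T, airyF x (t + u * I)) atTop
      (𝓝 (∫ t : ℝ, airyF x (t + u * I))) :=
    intervalIntegral_tendsto_integral (airyF_integrable x u hu)
      tendsto_neg_atTop_atBot tendsto_id
  have htot := (h1.sub (h4.const_mul Complex.I)).add (h5.const_mul Complex.I)
  simp only [mul_zero, sub_zero, add_zero] at htot
  refine htot.congr fun T => ?_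
  rw [C T]


open Complex in
lemma airyF_re (x t : ℝ) : (airyF x t).re = Real.cos (t ^ 3 / 3 + x * t) := by
  have : Complex.I * ((t:ℂ) ^ 3 / 3 + x * t) = ((t ^ 3 / 3 + x * t : ℝ) : ℂ) * Complex.I := by
    push_cast; ring
  rw [airyF, this, Complex.exp_ofReal_mul_I_re]

open Complex in
lemma Ai_eq (x u : ℝ) (hu : 0 < u) :
    Ai x = (1 / (2 * Real.pi)) * (∫ t : ℝ, airyF x (t + u * Complex.I)).re := by
  refine Filter.Tendsto.limUnder_eq ?_
  have hcont : Continuous fun t : ℝ => Real.cos (t ^ 3 / 3 + x * t) := by continuity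
  have key : ∀ T : ℝ, (∫ t in -T..T, airyF x t).re
      = 2 * ∫ t in (0:ℝ)..T, Real.cos (t ^ 3 / 3 + x * t) := by
    intro T
    have hint : IntervalIntegrable (fun t : ℝ => airyF x t) volume (-T) T :=
      ((airyF_cont x).comp Complex.continuous_ofReal).intervalIntegrable _ _
    have hre : (∫ t in -T..T, airyF x t).re
        = ∫ t in -T..T, Real.cos (t ^ 3 / 3 + x * t) := by
      have h := Complex.reCLM.intervalIntegral_comp_comm hint
      simp only [Complex.reCLM_apply] at h
      rw [← h]
      apply intervalIntegral.integral_congr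
      intro t _
      exact airyF_re x t
    rw [hre]
    have hsplit : ∫ t in -T..T, Real.cos (t ^ 3 / 3 + x * t)
        = (∫ t in -T..(0:ℝ), Real.cos (t ^ 3 / 3 + x * t))
          + ∫ t in (0:ℝ)..T, Real.cos (t ^ 3 / 3 + x * t) :=
      (intervalIntegral.integral_add_adjacent_intervals
        (hcont.intervalIntegrable _ _) (hcont.intervalIntegrable _ _)).symm
    have heven : (∫ t in -T..(0:ℝ), Real.cos (t ^ 3 / 3 + x * t))
        = ∫ t in (0:ℝ)..T, Real.cos (t ^ 3 / 3 + x * t) := by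
      have h := intervalIntegral.integral_comp_neg
        (fun t => Real.cos (t ^ 3 / 3 + x * t)) (a := 0) (b := T)
      rw [neg_zero] at h
      rw [← h]
      apply intervalIntegral.integral_congr
      intro t _
      simp only
      rw [show (-t) ^ 3 / 3 + x * -t = -(t ^ 3 / 3 + x * t) by ring, Real.cos_neg]
    rw [hsplit, heven]
    ring
  have h2 : Tendsto (fun T : ℝ => (1 / (2 * Real.pi)) * (∫ t in -T..T, airyF x t).re) atTop
      (𝓝 ((1 / (2 * Real.pi)) * (∫ t : ℝ, airyF x (t + u * Complex.I)).re)) :=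
    (((Complex.continuous_re.tendsto _).comp (airyF_tendsto x u hu)).const_mul _)
  refine h2.congr fun T => ?_
  rw [key T]
  have hπ : Real.pi ≠ 0 := Real.pi_ne_zero
  field_simp

lemma Ai_sq_le (x u : ℝ) (hu : 0 < u) :
    Ai x ^ 2 ≤ Real.exp (u ^ 3 / 3 - x * u) ^ 2 / (4 * (Real.pi * u)) := by
  have hπu : (0:ℝ) < Real.pi * u := mul_pos Real.pi_pos hu
  have habs : |Ai x| ≤ Real.exp (u ^ 3 / 3 - x * u) / (2 * Real.sqrt (Real.pi * u)) := by
    rw [Ai_eq x u hu, abs_mul]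
    have h1 : |(∫ t : ℝ, airyF x (t + u * Complex.I)).re|
        ≤ ‖∫ t : ℝ, airyF x (t + u * Complex.I)‖ := Complex.abs_re_le_norm _
    have h2 : ‖∫ t : ℝ, airyF x (t + u * Complex.I)‖
        ≤ ∫ t : ℝ, ‖airyF x (t + u * Complex.I)‖ := norm_integral_le_integral_norm _
    have h3 : (∫ t : ℝ, ‖airyF x (t + u * Complex.I)‖)
        = Real.exp (u ^ 3 / 3 - x * u) * Real.sqrt (Real.pi / u) := by
      have : ∀ t : ℝ, ‖airyF x (t + u * Complex.I)‖
          = Real.exp (u ^ 3 / 3 - x * u) * Real.exp (-u * t ^ 2) := by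
        intro t
        rw [airyF_norm, ← Real.exp_add]
        congr 1
        ring
      simp_rw [this]
      rw [integral_const_mul, integral_gaussian]
    have habs1 : |1 / (2 * Real.pi)| = 1 / (2 * Real.pi) := by
      rw [abs_of_pos]; positivity
    rw [habs1]
    calc 1 / (2 * Real.pi) * |(∫ t : ℝ, airyF x (t + u * Complex.I)).re|
        ≤ 1 / (2 * Real.pi) * (Real.exp (u ^ 3 / 3 - x * u) * Real.sqrt (Real.pi / u)) := by
          rw [← h3]
          exact mul_le_mul_of_nonneg_left (h1.trans h2) (by positivity)
      _ = Real.exp (u ^ 3 / 3 - x * u) / (2 * Real.sqrt (Real.pi * u)) := by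
          have hs : Real.sqrt (Real.pi / u) * Real.sqrt (Real.pi * u) = Real.pi := by
            rw [← Real.sqrt_mul (by positivity)]
            rw [show Real.pi / u * (Real.pi * u) = Real.pi ^ 2 by field_simp]
            exact Real.sqrt_sq Real.pi_pos.le
          have hkey : Real.sqrt (Real.pi / u) / (2 * Real.pi)
              = 1 / (2 * Real.sqrt (Real.pi * u)) := by
            rw [div_eq_div_iff (by positivity) (by positivity)]
            nlinarith [hs]
          calc 1 / (2 * Real.pi) * (Real.exp (u ^ 3 / 3 - x * u) * Real.sqrt (Real.pi / u))
              = Real.exp (u ^ 3 / 3 - x * u) * (Real.sqrt (Real.pi / u) / (2 * Real.pi)) := by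
                ring
            _ = Real.exp (u ^ 3 / 3 - x * u) * (1 / (2 * Real.sqrt (Real.pi * u))) := by
                rw [hkey]
            _ = Real.exp (u ^ 3 / 3 - x * u) / (2 * Real.sqrt (Real.pi * u)) := by ring
  have := mul_self_le_mul_self (abs_nonneg (Ai x)) habs
  rw [← abs_mul, abs_mul_self] at this
  calc Ai x ^ 2 = Ai x * Ai x := sq (Ai x) ▸ by ring
    _ ≤ (Real.exp (u ^ 3 / 3 - x * u) / (2 * Real.sqrt (Real.pi * u)))
        * (Real.exp (u ^ 3 / 3 - x * u) / (2 * Real.sqrt (Real.pi * u))) := this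
    _ = Real.exp (u ^ 3 / 3 - x * u) ^ 2 / (4 * (Real.pi * u)) := by
        rw [div_mul_div_comm, ← sq, ← sq]
        congr 1
        rw [mul_pow]
        rw [Real.sq_sqrt hπu.le]
        norm_num

lemma lint_exp (a s : ℝ) (ha : 0 < a) :
    ∫⁻ y in Set.Ioi s, ENNReal.ofReal (Real.exp (-(a * y)))
      = ENNReal.ofReal (Real.exp (-(a * s)) / a) := by
  have hint : IntegrableOn (fun y : ℝ => Real.exp (-(a * y))) (Set.Ioi s) := by
    simpa [neg_mul] using exp_neg_integrableOn_Ioi s ha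
  rw [← ofReal_integral_eq_lintegral_ofReal hint (ae_of_all _ fun y => Real.exp_nonneg _)]
  congr 1
  have hderiv : ∀ y : ℝ, HasDerivAt (fun y => -(1 / a) * Real.exp (-(a * y)))
      (Real.exp (-(a * y))) y := by
    intro y
    have h1 : HasDerivAt (fun y : ℝ => -(a * y)) (-a) y := by
      have := ((hasDerivAt_id y).const_mul a).neg
      simp only [mul_one] at this
      exact this
    have h2 := (h1.exp).const_mul (-(1 / a))
    refine h2.congr_deriv ?_
    linear_combination (Real.exp (-(a * y))) * inv_mul_cancel₀ ha.ne'
  have htend : Tendsto (fun y : ℝ => -(1 / a) * Real.exp (-(a * y))) atTop (𝓝 0) := by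
    have h1 : Tendsto (fun y : ℝ => -(a * y)) atTop atBot :=
      tendsto_neg_atTop_atBot.comp ((tendsto_const_mul_atTop_of_pos ha).mpr tendsto_id)
    have := (Real.tendsto_exp_atBot.comp h1).const_mul (-(1 / a))
    simpa using this
  have key := integral_Ioi_of_hasDerivAt_of_tendsto
    (f := fun y => -(1 / a) * Real.exp (-(a * y))) (f' := fun y => Real.exp (-(a * y)))
    ((hderiv s).continuousAt.continuousWithinAt) (fun y _ => hderiv y) hint htend
  rw [key]
  field_simp
  ring

/-- Lemma 3.9. -/
theorem K21_HS_bound (s₁ s₂ u : ℝ) (hs₁ : 0 ≤ s₁) (hs₂ : 0 ≤ s₂) (hu : 0 < u) :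
    (∫⁻ x in Set.Ioi s₂, ∫⁻ y in Set.Ioi s₁,
        ENNReal.ofReal (Ai (x + y + u ^ 2) ^ 2 *
          Real.exp (-2 * (x + y) * u - 4 * u ^ 3 / 3))) ≤
      ENNReal.ofReal (1 / (4 * u ^ 3) *
        Real.exp (-4 * (s₁ + s₂) * u - 8 * u ^ 3 / 3)) ∧
    HSnorm (fun x y => if s₂ < x ∧ s₁ < y then
        Ai (x + y + u ^ 2) * Real.exp (-(x + y) * u - 2 * u ^ 3 / 3) else 0) ≤
      1 / (2 * u ^ ((3 : ℝ) / 2)) * Real.exp (-2 * (s₁ + s₂) * u - 4 * u ^ 3 / 3) := by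
  have hπ := Real.pi_gt_three
  set c : ℝ := 1 / (4 * (Real.pi * u)) * Real.exp (-8 * u ^ 3 / 3) with hc
  have hc0 : 0 ≤ c := by positivity
  -- pointwise bound
  have hpt : ∀ x y : ℝ,
      Ai (x + y + u ^ 2) ^ 2 * Real.exp (-2 * (x + y) * u - 4 * u ^ 3 / 3)
        ≤ c * Real.exp (-(4 * u * x)) * Real.exp (-(4 * u * y)) := by
    intro x y
    have h1 := Ai_sq_le (x + y + u ^ 2) u hu
    have h2 : Real.exp (u ^ 3 / 3 - (x + y + u ^ 2) * u) ^ 2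
          * Real.exp (-2 * (x + y) * u - 4 * u ^ 3 / 3)
        = Real.exp (-8 * u ^ 3 / 3) * (Real.exp (-(4 * u * x)) * Real.exp (-(4 * u * y))) := by
      rw [sq, ← Real.exp_add, ← Real.exp_add, ← Real.exp_add, ← Real.exp_add]
      congr 1
      ring
    calc Ai (x + y + u ^ 2) ^ 2 * Real.exp (-2 * (x + y) * u - 4 * u ^ 3 / 3)
        ≤ Real.exp (u ^ 3 / 3 - (x + y + u ^ 2) * u) ^ 2 / (4 * (Real.pi * u))
            * Real.exp (-2 * (x + y) * u - 4 * u ^ 3 / 3) :=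
          mul_le_mul_of_nonneg_right h1 (Real.exp_nonneg _)
      _ = c * Real.exp (-(4 * u * x)) * Real.exp (-(4 * u * y)) := by
          rw [div_mul_eq_mul_div, h2, hc]
          ring
  have h4u : (0:ℝ) < 4 * u := by positivity
  have hofpt : ∀ x y : ℝ,
      ENNReal.ofReal (Ai (x + y + u ^ 2) ^ 2 * Real.exp (-2 * (x + y) * u - 4 * u ^ 3 / 3))
        ≤ ENNReal.ofReal (c * Real.exp (-(4 * u * x))) * ENNReal.ofReal (Real.exp (-(4 * u * y))) := by
    intro x y
    rw [← ENNReal.ofReal_mul (by positivity)]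
    exact ENNReal.ofReal_le_ofReal (hpt x y)
  have hinner : ∀ x : ℝ,
      (∫⁻ y in Set.Ioi s₁, ENNReal.ofReal (Ai (x + y + u ^ 2) ^ 2 *
          Real.exp (-2 * (x + y) * u - 4 * u ^ 3 / 3)))
        ≤ ENNReal.ofReal (c * Real.exp (-(4 * u * x)))
          * ENNReal.ofReal (Real.exp (-(4 * u * s₁)) / (4 * u)) := by
    intro x
    calc (∫⁻ y in Set.Ioi s₁, ENNReal.ofReal (Ai (x + y + u ^ 2) ^ 2 *
          Real.exp (-2 * (x + y) * u - 4 * u ^ 3 / 3)))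
        ≤ ∫⁻ y in Set.Ioi s₁, ENNReal.ofReal (c * Real.exp (-(4 * u * x)))
            * ENNReal.ofReal (Real.exp (-(4 * u * y))) := lintegral_mono fun y => hofpt x y
      _ = ENNReal.ofReal (c * Real.exp (-(4 * u * x)))
            * ∫⁻ y in Set.Ioi s₁, ENNReal.ofReal (Real.exp (-(4 * u * y))) :=
          lintegral_const_mul' _ _ ENNReal.ofReal_ne_top
      _ = _ := by rw [lint_exp (4 * u) s₁ h4u]
  have hIoi2 : (∫⁻ x in Set.Ioi s₂, ENNReal.ofReal (c * Real.exp (-(4 * u * x))))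
      = ENNReal.ofReal c * ENNReal.ofReal (Real.exp (-(4 * u * s₂)) / (4 * u)) := by
    simp_rw [ENNReal.ofReal_mul hc0]
    rw [lintegral_const_mul' _ _ ENNReal.ofReal_ne_top, lint_exp (4 * u) s₂ h4u]
  set V : ℝ := c * (Real.exp (-(4 * u * s₂)) / (4 * u)) * (Real.exp (-(4 * u * s₁)) / (4 * u))
    with hV
  have hV0 : 0 ≤ V := by positivity
  have houter : (∫⁻ x in Set.Ioi s₂, ∫⁻ y in Set.Ioi s₁,
        ENNReal.ofReal (Ai (x + y + u ^ 2) ^ 2 *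
          Real.exp (-2 * (x + y) * u - 4 * u ^ 3 / 3)))
      ≤ ENNReal.ofReal V := by
    calc (∫⁻ x in Set.Ioi s₂, ∫⁻ y in Set.Ioi s₁,
        ENNReal.ofReal (Ai (x + y + u ^ 2) ^ 2 *
          Real.exp (-2 * (x + y) * u - 4 * u ^ 3 / 3)))
        ≤ ∫⁻ x in Set.Ioi s₂, ENNReal.ofReal (c * Real.exp (-(4 * u * x)))
            * ENNReal.ofReal (Real.exp (-(4 * u * s₁)) / (4 * u)) := lintegral_mono hinner
      _ = (∫⁻ x in Set.Ioi s₂, ENNReal.ofReal (c * Real.exp (-(4 * u * x))))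
            * ENNReal.ofReal (Real.exp (-(4 * u * s₁)) / (4 * u)) :=
          lintegral_mul_const' _ _ ENNReal.ofReal_ne_top
      _ = ENNReal.ofReal c * ENNReal.ofReal (Real.exp (-(4 * u * s₂)) / (4 * u))
            * ENNReal.ofReal (Real.exp (-(4 * u * s₁)) / (4 * u)) := by rw [hIoi2]
      _ = ENNReal.ofReal V := by
          rw [hV,
              ENNReal.ofReal_mul
                (show (0:ℝ) ≤ c * (Real.exp (-(4 * u * s₂)) / (4 * u)) by positivity),
              ENNReal.ofReal_mul hc0]
  have hVeq : V = 1 / (64 * Real.pi * u ^ 3)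
      * Real.exp (-4 * (s₁ + s₂) * u - 8 * u ^ 3 / 3) := by
    rw [hV, hc, show Real.exp (-4 * (s₁ + s₂) * u - 8 * u ^ 3 / 3)
      = Real.exp (-8 * u ^ 3 / 3) * (Real.exp (-(4 * u * s₂)) * Real.exp (-(4 * u * s₁))) by
        rw [← Real.exp_add, ← Real.exp_add]; congr 1; ring]
    field_simp
    ring
  have hfrac : 1 / (64 * Real.pi * u ^ 3) ≤ 1 / (4 * u ^ 3) := by
    apply one_div_le_one_div_of_le (by positivity)
    nlinarith [pow_pos hu 3]
  have hVle : V ≤ 1 / (4 * u ^ 3) * Real.exp (-4 * (s₁ + s₂) * u - 8 * u ^ 3 / 3) := by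
    rw [hVeq]
    exact mul_le_mul_of_nonneg_right hfrac (Real.exp_nonneg _)
  constructor
  · exact houter.trans (ENNReal.ofReal_le_ofReal hVle)
  -- Part 2 : Hilbert-Schmidt norm
  · set g₁ : ℝ → ENNReal := Set.indicator (Set.Ioi s₂)
      (fun x => ENNReal.ofReal (c * Real.exp (-(4 * u * x)))) with hg₁
    set g₂ : ℝ → ENNReal := Set.indicator (Set.Ioi s₁)
      (fun y => ENNReal.ofReal (Real.exp (-(4 * u * y)))) with hg₂
    have hg₁m : Measurable g₁ :=
      (ENNReal.measurable_ofReal.comp (by fun_prop)).indicator measurableSet_Ioi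
    have hg₂m : Measurable g₂ :=
      (ENNReal.measurable_ofReal.comp (by fun_prop)).indicator measurableSet_Ioi
    have hK2 : ∀ p : ℝ × ℝ,
        ENNReal.ofReal ((if s₂ < p.1 ∧ s₁ < p.2 then
          Ai (p.1 + p.2 + u ^ 2) * Real.exp (-(p.1 + p.2) * u - 2 * u ^ 3 / 3) else 0) ^ 2)
          ≤ g₁ p.1 * g₂ p.2 := by
      intro p
      by_cases h : s₂ < p.1 ∧ s₁ < p.2
      · rw [if_pos h, hg₁, hg₂, Set.indicator_of_mem (show p.1 ∈ Set.Ioi s₂ from h.1),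
          Set.indicator_of_mem (show p.2 ∈ Set.Ioi s₁ from h.2)]
        have hsq : (Ai (p.1 + p.2 + u ^ 2)
              * Real.exp (-(p.1 + p.2) * u - 2 * u ^ 3 / 3)) ^ 2
            = Ai (p.1 + p.2 + u ^ 2) ^ 2
              * Real.exp (-2 * (p.1 + p.2) * u - 4 * u ^ 3 / 3) := by
          rw [mul_pow]
          congr 1
          rw [sq, ← Real.exp_add]
          congr 1
          ring
        rw [hsq]
        exact hofpt p.1 p.2
      · rw [if_neg h]
        simp only [ne_eq, OfNat.ofNat_ne_zero, not_false_eq_true, zero_pow,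
          ENNReal.ofReal_zero]
        exact zero_le
    have hprod : (∫⁻ p : ℝ × ℝ, g₁ p.1 * g₂ p.2)
        = (∫⁻ x, g₁ x) * ∫⁻ y, g₂ y := by
      rw [MeasureTheory.Measure.volume_eq_prod]
      exact lintegral_prod_mul hg₁m.aemeasurable hg₂m.aemeasurable
    have hg₁int : (∫⁻ x, g₁ x)
        = ENNReal.ofReal c * ENNReal.ofReal (Real.exp (-(4 * u * s₂)) / (4 * u)) := by
      rw [hg₁, lintegral_indicator measurableSet_Ioi]
      exact hIoi2
    have hg₂int : (∫⁻ y, g₂ y) = ENNReal.ofReal (Real.exp (-(4 * u * s₁)) / (4 * u)) := by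
      rw [hg₂, lintegral_indicator measurableSet_Ioi]
      exact lint_exp (4 * u) s₁ h4u
    have htot : (∫⁻ p : ℝ × ℝ, ENNReal.ofReal ((if s₂ < p.1 ∧ s₁ < p.2 then
          Ai (p.1 + p.2 + u ^ 2) * Real.exp (-(p.1 + p.2) * u - 2 * u ^ 3 / 3) else 0) ^ 2))
        ≤ ENNReal.ofReal V := by
      calc (∫⁻ p : ℝ × ℝ, ENNReal.ofReal ((if s₂ < p.1 ∧ s₁ < p.2 then
          Ai (p.1 + p.2 + u ^ 2) * Real.exp (-(p.1 + p.2) * u - 2 * u ^ 3 / 3) else 0) ^ 2))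
          ≤ ∫⁻ p : ℝ × ℝ, g₁ p.1 * g₂ p.2 := lintegral_mono hK2
        _ = ENNReal.ofReal c * ENNReal.ofReal (Real.exp (-(4 * u * s₂)) / (4 * u))
              * ENNReal.ofReal (Real.exp (-(4 * u * s₁)) / (4 * u)) := by
            rw [hprod, hg₁int, hg₂int]
        _ = ENNReal.ofReal V := by
            rw [hV,
              ENNReal.ofReal_mul
                (show (0:ℝ) ≤ c * (Real.exp (-(4 * u * s₂)) / (4 * u)) by positivity),
              ENNReal.ofReal_mul hc0]
    -- conclude
    have hVeq2 : V = 1 / (64 * Real.pi * u ^ 3)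
        * Real.exp (-2 * (s₁ + s₂) * u - 4 * u ^ 3 / 3) ^ 2 := by
      rw [hVeq]
      congr 1
      rw [sq, ← Real.exp_add]
      congr 1
      ring
    have hrpow : (u ^ ((3 : ℝ) / 2)) ^ 2 = u ^ 3 := by
      rw [← Real.rpow_natCast (u ^ ((3 : ℝ) / 2)) 2, ← Real.rpow_mul hu.le,
        show (3 : ℝ) / 2 * (2 : ℕ) = ((3 : ℕ) : ℝ) by norm_num, Real.rpow_natCast]
    have hru : (0 : ℝ) < u ^ ((3 : ℝ) / 2) := Real.rpow_pos_of_pos hu _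
    have hsqrtV : Real.sqrt V ≤ 1 / (2 * u ^ ((3 : ℝ) / 2))
        * Real.exp (-2 * (s₁ + s₂) * u - 4 * u ^ 3 / 3) := by
      rw [hVeq2, Real.sqrt_mul (by positivity),
        Real.sqrt_sq (Real.exp_nonneg _)]
      apply mul_le_mul_of_nonneg_right _ (Real.exp_nonneg _)
      rw [show (1 : ℝ) / (2 * u ^ ((3 : ℝ) / 2)) = Real.sqrt (1 / (4 * u ^ 3)) by
        rw [show (1 : ℝ) / (4 * u ^ 3) = (1 / (2 * u ^ ((3 : ℝ) / 2))) ^ 2 by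
            rw [div_pow, mul_pow, hrpow]; norm_num,
          Real.sqrt_sq (by positivity)]]
      exact Real.sqrt_le_sqrt hfrac
    rw [HSnorm]
    calc Real.sqrt (∫⁻ p : ℝ × ℝ, ENNReal.ofReal ((if s₂ < p.1 ∧ s₁ < p.2 then
          Ai (p.1 + p.2 + u ^ 2)
            * Real.exp (-(p.1 + p.2) * u - 2 * u ^ 3 / 3) else 0) ^ 2)).toReal
        ≤ Real.sqrt V := Real.sqrt_le_sqrt (ENNReal.toReal_le_of_le_ofReal hV0 htot)
      _ ≤ _ := hsqrtV
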